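/- The price of EF1 for unscaled additive valuations is Ω(n): for every ε > 0 there exists an instance with n agents and n goods with additive valuations in which the optimal social welfare is n², while every EF1 allocation has social welfare less than n + 1. -/

import Mathlib

open Finset

/-- Price of EF1 for unscaled additive valuations is Ω(n). In the instance
with `n` agents and `n` goods where agent `1` (index 0) values every good at `n` and
every other agent values every good at `1/n`, the optimal social welfare is `n²`
(allocating everything to agent 1), while every EF1 allocation has social welfare
strictly less than `n + 1`. -/
theorem price_of_ef1_unscaled_lower_bound
    (n : ℕ) (hn : 1 ≤ n)
    (v : Fin n → Fin n → ℝ)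
    (hv : ∀ i g, v i g = if (i : ℕ) = 0 then (n : ℝ) else 1 / (n : ℝ)) :
    (∑ g : Fin n, v ⟨0, hn⟩ g = (n : ℝ) ^ 2) ∧
    (∀ A : Fin n → Finset (Fin n),
      (∀ a b : Fin n, a ≠ b → Disjoint (A a) (A b)) →
      Finset.univ.biUnion A = Finset.univ →
      (∀ i j : Fin n, (A j).Nonempty →
        ∃ g ∈ A j, ∑ h ∈ A j \ {g}, v i h ≤ ∑ h ∈ A i, v i h) →
      ∑ i, ∑ g ∈ A i, v i g < (n : ℝ) + 1) := by
  have hnpos : (0:ℝ) < n := by exact_mod_cast hn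
  constructor
  · simp only [hv]
    simp [sq]
  · intro A hdisj hU hEF1
    set c : Fin n → ℝ := fun i => if (i : ℕ) = 0 then (n : ℝ) else 1 / (n : ℝ) with hc
    have hcpos : ∀ i, 0 < c i := by
      intro i
      simp only [hc]
      split <;> positivity
    have hsum : ∀ (i : Fin n) (s : Finset (Fin n)), ∑ g ∈ s, v i g = s.card * c i := by
      intro i s
      rw [Finset.sum_congr rfl (fun g _ => hv i g)]
      simp [hc, mul_comm]
    have hcard : ∑ i, (A i).card = n := by
      rw [← Finset.card_biUnion (fun a _ b _ hab => hdisj a b hab), hU,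
        Finset.card_univ, Fintype.card_fin]
    -- every bundle is nonempty
    have hne : ∀ i, (A i).Nonempty := by
      by_contra h
      push_neg at h
      obtain ⟨i0, hi0⟩ := h
      have hi0' : (A i0).card = 0 := by
        simp [hi0]
      have hle : ∀ j, (A j).card ≤ 1 := by
        intro j
        by_cases hj : (A j).Nonempty
        · obtain ⟨g, hg, hineq⟩ := hEF1 i0 j hj
          rw [hsum, hsum, hi0'] at hineq
          have hcd : ((A j \ {g}).card : ℝ) ≤ 0 := by
            have hp := hcpos i0
            push_cast at hineq
            nlinarith
          have : (A j \ {g}).card = 0 := by exact_mod_cast le_antisymm hcd (by positivity)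
          have hcd2 : (A j).card - 1 = 0 := by
            rwa [Finset.card_sdiff_of_subset (by simpa using hg), Finset.card_singleton] at this
          omega
        · rw [Finset.not_nonempty_iff_eq_empty] at hj
          simp [hj]
      have : ∑ i, (A i).card < n := by
        calc ∑ i, (A i).card = (A i0).card + ∑ i ∈ Finset.univ.erase i0, (A i).card := by
              rw [add_comm, Finset.sum_erase_add _ _ (Finset.mem_univ i0)]
          _ ≤ 0 + ∑ i ∈ Finset.univ.erase i0, 1 := by
              gcongr with i hi
              · omega
              · exact hle i
          _ = n - 1 := by simp [Finset.card_erase_of_mem]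
          _ < n := by omega
      omega
    -- every bundle has exactly one good
    have hone : ∀ i, (A i).card = 1 := by
      have h1 : ∀ i ∈ Finset.univ, 1 ≤ (A i).card := fun i _ => (hne i).card_pos
      have hsum1 : ∑ i : Fin n, 1 = ∑ i, (A i).card := by
        rw [hcard]; simp
      intro i
      exact ((Finset.sum_eq_sum_iff_of_le h1).mp hsum1 i (Finset.mem_univ i)).symm
    have hwel : ∑ i, ∑ g ∈ A i, v i g = ∑ i, c i := by
      refine Finset.sum_congr rfl fun i _ => ?_
      rw [hsum, hone]
      simp
    rw [hwel]
    set z : Fin n := ⟨0, hn⟩ with hz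
    have hsplit : ∑ i, c i = c z + ∑ i ∈ Finset.univ.erase z, c i := by
      rw [add_comm, Finset.sum_erase_add _ _ (Finset.mem_univ z)]
    rw [hsplit]
    have hcz : c z = n := by simp [hc, hz]
    have herase : ∑ i ∈ Finset.univ.erase z, c i = ((n - 1 : ℕ) : ℝ) * (1 / n) := by
      have hch : ∀ i ∈ Finset.univ.erase z, c i = 1 / n := by
        intro i hi
        have hi' : i ≠ z := Finset.ne_of_mem_erase hi
        have h0 : (i : ℕ) ≠ 0 := fun h => hi' (Fin.ext (by simp [hz, h]))
        simp [hc, h0]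
      rw [Finset.sum_congr rfl hch, Finset.sum_const,
        Finset.card_erase_of_mem (Finset.mem_univ z), Finset.card_univ, Fintype.card_fin,
        nsmul_eq_mul]
    rw [hcz, herase]
    have h1 : ((n - 1 : ℕ) : ℝ) * (1 / n) < 1 := by
      rw [mul_one_div, div_lt_one hnpos]
      exact_mod_cast Nat.sub_lt (by omega) one_pos
    linarith
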